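/- Let H be a real separable Hilbert space, S ⊆ H a nonempty closed set, x ∈ H with x ∉ S, and v ∈ H. Then the one-sided directional derivative lim_{h↓0} [d_S(x+hv) − d_S(x)]/h exists and equals min_{y* ∈ ∂d_S(x)} ⟨y*, v⟩, where ∂d_S(x) is the Clarke subdifferential of the distance function d_S at x. -/

import Mathlib

open Metric Set MeasureTheory Filter Pointwise
open Topology RealInnerProductSpace

noncomputable section

variable {H : Type} [NormedAddCommGroup H] [InnerProductSpace ℝ H]

/-- The Clarke generalized directional derivative of `f` at `x` in direction `h`. -/
def clarkeDeriv (f : H → ℝ) (x h : H) : ℝ :=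
  Filter.limsup (fun p : H × ℝ => (f (p.1 + p.2 • h) - f p.1) / p.2)
    ((nhds x) ×ˢ (nhdsWithin 0 (Ioi (0:ℝ))))

/-- The Clarke subdifferential of `f` at `x`. -/
def clarkeSubdiff (f : H → ℝ) (x : H) : Set H :=
  {v : H | ∀ h : H, (inner ℝ v h : ℝ) ≤ clarkeDeriv f x h}

/-- The closure of a set with respect to the weak topology of `H`. -/
def weakClosure (A : Set H) : Set H :=
  (toWeakSpace ℝ H) ⁻¹' (closure ((toWeakSpace ℝ H) '' A))

/-- The Clarke normal cone to `S` at `x`: the weak closure of `ℝ₊ ∂d_S(x)`. -/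
def clarkeNormalCone (S : Set H) (x : H) : Set H :=
  weakClosure {w : H | ∃ l : ℝ, ∃ v ∈ clarkeSubdiff (fun u => infDist u S) x,
    0 ≤ l ∧ w = l • v}

/-- The (possibly empty) set of nearest points of `x` in `S`. -/
def projSet (S : Set H) (x : H) : Set H :=
  {y ∈ S | ‖x - y‖ = infDist x S}

/-- A family of closed sets is equi-uniformly subsmooth. -/
def EquiUniformlySubsmooth {ι : Sort*} (S : ι → Set H) : Prop :=
  ∀ ε > (0:ℝ), ∃ δ > (0:ℝ), ∀ j : ι, ∀ x₁ ∈ S j, ∀ x₂ ∈ S j, ‖x₁ - x₂‖ < δ →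
    ∀ v₁ ∈ clarkeNormalCone (S j) x₁ ∩ closedBall 0 1,
    ∀ v₂ ∈ clarkeNormalCone (S j) x₂ ∩ closedBall 0 1,
      -ε * ‖x₁ - x₂‖ ≤ (inner ℝ (v₁ - v₂) (x₁ - x₂) : ℝ)

/-- The Hausdorff measure of non-compactness of a set. -/
def hausMNC (A : Set H) : ℝ :=
  sInf {r : ℝ | 0 < r ∧ ∃ F : Finset H, A ⊆ ⋃ c ∈ F, closedBall c r}

/-- `v` is the derivative of the absolutely continuous function `x` on `[0,T]`. -/
def IsACDerivOn {E : Type} [NormedAddCommGroup E] [NormedSpace ℝ E] (T : ℝ)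
    (x v : ℝ → E) : Prop :=
  IntegrableOn v (Icc 0 T) volume ∧ ∀ t ∈ Icc 0 T, x t = x 0 + ∫ s in (0:ℝ)..t, v s

lemma sqrt_quad {d e : ℝ} (hd : 0 < d) (h0 : 0 ≤ d^2 + e) :
    Real.sqrt (d^2 + e) ≤ d + e/(2*d) := by
  have h2d : (0:ℝ) < 2*d := by linarith
  have h1 : -d ≤ e/(2*d) := by rw [le_div_iff₀ h2d]; nlinarith
  have h3 : 0 ≤ d + e/(2*d) := by linarith
  have h4 : d^2 + e ≤ (d + e/(2*d))^2 := by
    have he : e/(2*d) * (2*d) = e := div_mul_cancel₀ e (ne_of_gt h2d)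
    nlinarith [sq_nonneg (e/(2*d))]
  calc Real.sqrt (d^2+e) ≤ Real.sqrt ((d + e/(2*d))^2) := Real.sqrt_le_sqrt h4
    _ = d + e/(2*d) := Real.sqrt_sq h3

/-- `u ↦ ‖u‖² - d_S(u)²`. -/
def gfun (S : Set H) (u : H) : ℝ := ‖u‖^2 - (infDist u S)^2

lemma gfun_continuous (S : Set H) : Continuous (gfun S) := by
  unfold gfun
  exact ((continuous_norm).pow 2).sub ((continuous_infDist_pt S).pow 2)

lemma gfun_convex {S : Set H} (hne : S.Nonempty) (u z : H) {a b : ℝ}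
    (ha : 0 ≤ a) (hb : 0 ≤ b) (hab : a + b = 1) :
    gfun S (a•u + b•z) ≤ a * gfun S u + b * gfun S z := by
  set p := a•u + b•z with hp
  refine le_of_forall_pos_le_add (fun ε hε => ?_)
  set d := infDist p S with hdd
  have hd0 : 0 ≤ d := infDist_nonneg
  set δ := min 1 (ε/(2*d+1)) with hδdef
  have hδ : 0 < δ := lt_min one_pos (div_pos hε (by linarith))
  obtain ⟨y, hyS, hy⟩ := (infDist_lt_iff hne).1 (show infDist p S < d + δ by linarith)
  have key : ∀ w : H, 2*⟪w,y⟫ - ‖y‖^2 ≤ gfun S w := by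
    intro w
    have h1 : infDist w S ≤ ‖w - y‖ := by
      rw [← dist_eq_norm]; exact infDist_le_dist_of_mem hyS
    have h1' : (0:ℝ) ≤ infDist w S := infDist_nonneg
    have h2 : (infDist w S)^2 ≤ ‖w-y‖^2 := by nlinarith
    have h3 := norm_sub_sq_real w y
    unfold gfun; nlinarith
  have hpy : ‖p - y‖ < d + δ := by rw [← dist_eq_norm]; exact hy
  have hP : gfun S p ≤ 2*⟪p,y⟫ - ‖y‖^2 + δ*(2*d+δ) := by
    have h2 : ‖p-y‖^2 < (d+δ)^2 := by nlinarith [norm_nonneg (p-y)]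
    have h3 := norm_sub_sq_real p y
    unfold gfun; nlinarith
  have hlin : 2*⟪p,y⟫ - ‖y‖^2 = a*(2*⟪u,y⟫ - ‖y‖^2) + b*(2*⟪z,y⟫ - ‖y‖^2) := by
    rw [hp, inner_add_left, real_inner_smul_left, real_inner_smul_left]
    linear_combination (‖y‖^2) * hab
  have hδε : δ*(2*d+δ) ≤ ε := by
    have h1 : δ ≤ 1 := min_le_left _ _
    have h2 : δ ≤ ε/(2*d+1) := min_le_right _ _
    have h3 : δ*(2*d+1) ≤ ε := (le_div_iff₀ (show (0:ℝ) < 2*d+1 by linarith)).1 h2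
    nlinarith
  have := key u
  have := key z
  nlinarith [hP, hlin]

/-- Three-point slope inequality for `gfun` along the line through `y` in direction `v`. -/
lemma gfun_slope {S : Set H} (hne : S.Nonempty) (y v : H) {t t₀ : ℝ}
    (ht : 0 < t) (ht₀ : 0 < t₀) :
    (gfun S y - gfun S (y - t•v))/t ≤ (gfun S (y + t₀•v) - gfun S y)/t₀ := by
  have htt : 0 < t + t₀ := by linarith
  have hab : t₀/(t+t₀) + t/(t+t₀) = 1 := by field_simp; ring
  have hcomb : (t₀/(t+t₀))•(y - t•v) + (t/(t+t₀))•(y + t₀•v) = y := by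
    rw [smul_sub, smul_add, smul_smul, smul_smul]
    have h1 : t₀/(t+t₀) + t/(t+t₀) = 1 := hab
    have h2 : t₀/(t+t₀) * t = t/(t+t₀) * t₀ := by field_simp
    calc (t₀/(t+t₀))•y - (t₀/(t+t₀)*t)•v + ((t/(t+t₀))•y + (t/(t+t₀)*t₀)•v)
        = (t₀/(t+t₀) + t/(t+t₀))•y + ((t/(t+t₀)*t₀) - (t₀/(t+t₀)*t))•v := by
          rw [add_smul, sub_smul]; abel
      _ = y := by rw [h1, h2, sub_self, one_smul, zero_smul, add_zero]
  have hconv := gfun_convex hne (y - t•v) (y + t₀•v)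
    (a := t₀/(t+t₀)) (b := t/(t+t₀))
    (le_of_lt (div_pos ht₀ htt)) (le_of_lt (div_pos ht htt)) hab
  rw [hcomb] at hconv
  rw [div_le_div_iff₀ ht ht₀]
  have h2 : (t+t₀) * gfun S y ≤ t₀ * gfun S (y-t•v) + t * gfun S (y+t₀•v) := by
    have h3 := mul_le_mul_of_nonneg_left hconv htt.le
    have e1 : (t+t₀) * (t₀/(t+t₀) * gfun S (y-t•v) + t/(t+t₀) * gfun S (y+t₀•v))
        = t₀ * gfun S (y-t•v) + t * gfun S (y+t₀•v) := by
      field_simp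
    rw [e1] at h3; exact h3
  nlinarith [h2]

/-- Slope monotonicity at the left endpoint. -/
lemma gfun_slope_mono {S : Set H} (hne : S.Nonempty) (x v : H) {s t : ℝ}
    (hs : 0 < s) (hst : s ≤ t) :
    (gfun S (x + s•v) - gfun S x)/s ≤ (gfun S (x + t•v) - gfun S x)/t := by
  rcases eq_or_lt_of_le hst with rfl | hlt
  · exact le_refl _
  · have ht : 0 < t := lt_trans hs hlt
    have hab : (1 - s/t) + s/t = 1 := by ring
    have hcomb : (1 - s/t)•x + (s/t)•(x + t•v) = x + s•v := by
      rw [smul_add, smul_smul]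
      have h2 : s/t * t = s := div_mul_cancel₀ s (ne_of_gt ht)
      rw [h2, sub_smul, one_smul]
      abel
    have hconv := gfun_convex hne x (x + t•v) (a := 1 - s/t) (b := s/t)
      (by have := div_le_one_of_le₀ hst ht.le; linarith)
      (le_of_lt (div_pos hs ht)) hab
    rw [hcomb] at hconv
    rw [div_le_div_iff₀ hs ht]
    have h3 := mul_le_mul_of_nonneg_left hconv ht.le
    have e1 : t * ((1 - s/t) * gfun S x + s/t * gfun S (x + t•v))
        = (t-s) * gfun S x + s * gfun S (x + t•v) := by
      field_simp
    rw [e1] at h3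
    nlinarith [h3]



set_option maxHeartbeats 2000000 in
/-- Lemma 4.1: outside `S`, the one-sided directional derivative of the distance
function exists and equals the minimum of `⟨y*, v⟩` over `∂d_S(x)`. -/
theorem dir_deriv_dist_eq_min_inner
    {H : Type} [NormedAddCommGroup H] [InnerProductSpace ℝ H] [CompleteSpace H]
    [TopologicalSpace.SeparableSpace H]
    (S : Set H) (hne : S.Nonempty) (hcl : IsClosed S)
    (x : H) (hx : x ∉ S) (v : H) :
    Filter.Tendsto
        (fun h : ℝ => (infDist (x + h • v) S - infDist x S) / h)
        (nhdsWithin 0 (Ioi (0:ℝ)))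
        (nhds (sInf ((fun w : H => (inner ℝ w v : ℝ)) ''
          clarkeSubdiff (fun u => infDist u S) x))) := by
  have hfx : 0 < infDist x S := (hcl.notMem_iff_infDist_pos hne).1 hx
  set σ : ℝ → ℝ := fun t => (gfun S (x + t•v) - gfun S x)/t with hσdef
  have hσne : σ 1 ∈ σ '' Ioi 0 := ⟨1, Set.mem_Ioi.2 one_pos, rfl⟩
  have hbdd : BddBelow (σ '' Ioi 0) := by
    refine ⟨(gfun S x - gfun S (x - (1:ℝ)•v))/1, ?_⟩
    rintro _ ⟨t, ht, rfl⟩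
    exact gfun_slope hne x v one_pos ht
  set Gd := sInf (σ '' Ioi 0) with hGddef
  have hGd_le : ∀ t, 0 < t → Gd ≤ σ t := fun t ht => csInf_le hbdd ⟨t, ht, rfl⟩
  have hσtendsto : Tendsto σ (𝓝[>](0:ℝ)) (𝓝 Gd) := by
    rw [tendsto_order]
    constructor
    · intro c hc
      filter_upwards [self_mem_nhdsWithin] with t ht
      exact lt_of_lt_of_le hc (hGd_le t ht)
    · intro c hc
      obtain ⟨_, ⟨t₀, ht₀, rfl⟩, hlt⟩ :=
        exists_lt_of_csInf_lt ⟨σ 1, hσne⟩ hc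
      filter_upwards [Ioo_mem_nhdsGT_of_mem (⟨le_refl (0:ℝ), ht₀⟩ : (0:ℝ) ∈ Ico 0 t₀)]
        with t ht
      exact lt_of_le_of_lt (gfun_slope_mono hne x v ht.1 ht.2.le) hlt
  set L := (2*⟪x,v⟫ - Gd)/(2*infDist x S) with hLdef
  -- Step 1 : the one-sided limit exists and equals L
  have hnum : Tendsto (fun t : ℝ => 2*⟪x,v⟫ + t*‖v‖^2 - σ t) (𝓝[>](0:ℝ))
      (𝓝 (2*⟪x,v⟫ - Gd)) := by
    have h1 : Tendsto (fun t : ℝ => 2*⟪x,v⟫ + t*‖v‖^2) (𝓝[>](0:ℝ)) (𝓝 (2*⟪x,v⟫)) := by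
      have hc : Continuous fun t : ℝ => 2*⟪x,v⟫ + t*‖v‖^2 :=
        continuous_const.add (continuous_id.mul continuous_const)
      have h2 : Tendsto (fun t : ℝ => 2*⟪x,v⟫ + t*‖v‖^2) (𝓝[>](0:ℝ))
          (𝓝 (2*⟪x,v⟫ + 0*‖v‖^2)) :=
        (hc.tendsto 0).mono_left nhdsWithin_le_nhds
      simpa using h2
    simpa using h1.sub hσtendsto
  have hden : Tendsto (fun t : ℝ => infDist (x + t•v) S + infDist x S) (𝓝[>](0:ℝ))
      (𝓝 (2*infDist x S)) := by
    have hc : Continuous fun t : ℝ => infDist (x + t•v) S + infDist x S :=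
      ((continuous_infDist_pt S).comp
        (continuous_const.add (continuous_id.smul continuous_const))).add continuous_const
    have h2 : Tendsto (fun t : ℝ => infDist (x + t•v) S + infDist x S) (𝓝[>](0:ℝ))
        (𝓝 (infDist (x + (0:ℝ)•v) S + infDist x S)) :=
      (hc.tendsto 0).mono_left nhdsWithin_le_nhds
    simp only [zero_smul, add_zero] at h2
    convert h2 using 2
    ring
  have hq := hnum.div hden (by positivity)
  have step1 : Tendsto (fun t : ℝ => (infDist (x + t•v) S - infDist x S)/t)
      (𝓝[>](0:ℝ)) (𝓝 L) := by
    refine Tendsto.congr' ?_ hq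
    filter_upwards [self_mem_nhdsWithin] with t ht
    have ht' : (0:ℝ) < t := ht
    set a := infDist (x + t•v) S with hadef
    set b := infDist x S with hbdef
    have ha0 : 0 ≤ a := infDist_nonneg
    have hab : 0 < a + b := by linarith
    have e1 : ‖x + t•v‖^2 = ‖x‖^2 + 2*(t*⟪x,v⟫) + t^2*‖v‖^2 := by
      rw [norm_add_sq_real, real_inner_smul_right, norm_smul, Real.norm_eq_abs,
        mul_pow, sq_abs]
    have e3 : a^2 = ‖x + t•v‖^2 - gfun S (x + t•v) := by
      simp [gfun, hadef]
    have e4 : b^2 = ‖x‖^2 - gfun S x := by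
      simp [gfun, hbdef]
    have hsq : a^2 - b^2 = t*(2*⟪x,v⟫ + t*‖v‖^2) - (gfun S (x + t•v) - gfun S x) := by
      rw [e3, e4, e1]; ring
    have hdiff : a - b = (a^2 - b^2)/(a+b) := by
      field_simp
      ring
    have e2 : σ t = (gfun S (x + t•v) - gfun S x)/t := rfl
    simp only [Pi.div_apply]
    rw [e2, hdiff, hsq]
    have hab' : a + b ≠ 0 := hab.ne'
    have ht'' : t ≠ 0 := ht'.ne'
    rw [← hadef]
    field_simp
  -- Lipschitz property of the distance function
  have hlip : ∀ a b : H, |infDist a S - infDist b S| ≤ ‖a - b‖ := by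
    intro a b
    rw [abs_sub_le_iff]
    constructor
    · have := infDist_le_infDist_add_dist (x := a) (y := b) (s := S)
      rw [dist_eq_norm] at this; linarith
    · have := infDist_le_infDist_add_dist (x := b) (y := a) (s := S)
      rw [dist_eq_norm, norm_sub_rev] at this; linarith
  set Φ : Filter (H × ℝ) := (𝓝 x) ×ˢ (𝓝[>](0:ℝ)) with hΦdef
  haveI hΦne : Φ.NeBot := by
    rw [hΦdef]; exact Filter.prod_neBot.2 ⟨inferInstance, inferInstance⟩
  have hΦle : Φ ≤ 𝓝 ((x, 0) : H × ℝ) := by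
    rw [hΦdef, nhds_prod_eq]
    exact Filter.prod_mono le_rfl nhdsWithin_le_nhds
  have hΦpos : ∀ᶠ p : H × ℝ in Φ, 0 < p.2 := by
    have hmem : (univ ×ˢ Ioi (0:ℝ)) ∈ Φ := by
      rw [hΦdef]; exact prod_mem_prod univ_mem self_mem_nhdsWithin
    exact Filter.mem_of_superset hmem (by rintro ⟨y, t⟩ ⟨-, ht⟩; exact ht)
  have habs : ∀ h : H, ∀ᶠ p : H × ℝ in Φ,
      |(infDist (p.1 + p.2 • h) S - infDist p.1 S)/p.2| ≤ ‖h‖ := by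
    intro h
    filter_upwards [hΦpos] with p hp
    have h1 := hlip (p.1 + p.2 • h) p.1
    rw [add_sub_cancel_left] at h1
    rw [abs_div, abs_of_pos hp, div_le_iff₀ hp]
    calc |infDist (p.1 + p.2•h) S - infDist p.1 S| ≤ ‖p.2 • h‖ := h1
      _ = p.2 * ‖h‖ := by rw [norm_smul, Real.norm_eq_abs, abs_of_pos hp]
      _ = ‖h‖ * p.2 := mul_comm _ _
  have hBdd : ∀ h : H, IsBoundedUnder (· ≤ ·) Φ
      (fun p : H × ℝ => (infDist (p.1 + p.2 • h) S - infDist p.1 S)/p.2) := by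
    intro h
    refine ⟨‖h‖, ?_⟩
    rw [eventually_map]
    filter_upwards [habs h] with p hp using (abs_le.1 hp).2
  have hCobdd : ∀ h : H, IsCoboundedUnder (· ≤ ·) Φ
      (fun p : H × ℝ => (infDist (p.1 + p.2 • h) S - infDist p.1 S)/p.2) := by
    intro h
    refine isCoboundedUnder_le_of_eventually_le Φ (x := -‖h‖) ?_
    filter_upwards [habs h] with p hp using (abs_le.1 hp).1
  -- Part (i) : Clarke derivative in direction `-v` is at most `-L`
  have hCDneg : clarkeDeriv (fun u => infDist u S) x (-v) ≤ -L := by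
    refine le_of_forall_pos_le_add (fun ε hε => ?_)
    obtain ⟨_, ⟨t₀, ht₀, rfl⟩, hσt₀⟩ :=
      exists_lt_of_csInf_lt ⟨σ 1, hσne⟩
        (show Gd < Gd + infDist x S * ε by nlinarith)
    have ht₀' : (0:ℝ) < t₀ := ht₀
    set N : H × ℝ → ℝ := fun p =>
      -2*⟪p.1,v⟫ + p.2*‖v‖^2 + (gfun S (p.1 + t₀•v) - gfun S p.1)/t₀ with hNdef
    set D : H × ℝ → ℝ := fun p => infDist (p.1 - p.2•v) S + infDist p.1 S with hDdef
    have hNc : Continuous N := by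
      have c1 : Continuous fun p : H × ℝ => (⟪p.1, v⟫ : ℝ) :=
        continuous_fst.inner continuous_const
      have c2 : Continuous fun p : H × ℝ => gfun S (p.1 + t₀•v) :=
        (gfun_continuous S).comp (continuous_fst.add continuous_const)
      have c3 : Continuous fun p : H × ℝ => gfun S p.1 :=
        (gfun_continuous S).comp continuous_fst
      exact ((continuous_const.mul c1).add
        (continuous_snd.mul continuous_const)).add ((c2.sub c3).div_const t₀)
    have hDc : Continuous D :=
      ((continuous_infDist_pt S).comp
        (continuous_fst.sub (continuous_snd.smul continuous_const))).add
        ((continuous_infDist_pt S).comp continuous_fst)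
    have hTN : Tendsto N Φ (𝓝 (N (x,0))) := (hNc.tendsto _).mono_left hΦle
    have hTD : Tendsto D Φ (𝓝 (D (x,0))) := (hDc.tendsto _).mono_left hΦle
    have hDx : D ((x, 0) : H × ℝ) = 2*infDist x S := by
      simp only [hDdef, zero_smul, sub_zero]
      ring
    have hρ : Tendsto (fun p => N p / D p) Φ (𝓝 (N (x,0)/(2*infDist x S))) := by
      rw [← hDx]
      exact hTN.div hTD (by rw [hDx]; positivity)
    have hNx : N ((x, 0) : H × ℝ) = -2*⟪x,v⟫ + σ t₀ := by
      simp only [hNdef, zero_mul, add_zero, hσdef]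
    have hval : N ((x,0) : H × ℝ)/(2*infDist x S) < -L + ε := by
      rw [hNx]
      have hfx' : (0:ℝ) < 2*infDist x S := by positivity
      rw [div_lt_iff₀ hfx']
      have hL' : L * (2*infDist x S) = 2*⟪x,v⟫ - Gd := by
        rw [hLdef]; field_simp
      nlinarith [hσt₀]
    have hev1 : ∀ᶠ p in Φ, N p / D p < -L + ε := hρ.eventually_lt_const hval
    have hev2 : ∀ᶠ p in Φ, 0 < D p :=
      hTD.eventually_const_lt (show (0:ℝ) < D (x,0) by rw [hDx]; positivity)
    have hevq : ∀ᶠ p : H × ℝ in Φ,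
        (infDist (p.1 + p.2 • (-v)) S - infDist p.1 S)/p.2 ≤ -L + ε := by
      filter_upwards [hev1, hev2, hΦpos] with p h1 h2 h3
      have hyt : p.1 + p.2 • (-v) = p.1 - p.2•v := by
        rw [smul_neg, ← sub_eq_add_neg]
      rw [hyt]
      set t := p.2 with htdef
      set y := p.1 with hydef
      set a := infDist (y - t•v) S with hadef
      set b := infDist y S with hbdef
      have hab : 0 < a + b := h2
      have e1 : ‖y - t•v‖^2 = ‖y‖^2 - 2*(t*⟪y,v⟫) + t^2*‖v‖^2 := by
        rw [norm_sub_sq_real, real_inner_smul_right, norm_smul, Real.norm_eq_abs,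
          mul_pow, sq_abs]
      have e3 : a^2 = ‖y - t•v‖^2 - gfun S (y - t•v) := by simp [gfun, hadef]
      have e4 : b^2 = ‖y‖^2 - gfun S y := by simp [gfun, hbdef]
      have hsq : a^2 - b^2 = t*(-2*⟪y,v⟫ + t*‖v‖^2) + (gfun S y - gfun S (y - t•v)) := by
        rw [e3, e4, e1]; ring
      have hslope := gfun_slope hne y v h3 ht₀'
      have hdiff : a - b = (a^2-b^2)/(a+b) := by field_simp; ring
      have key : (a-b)/t
          = (-2*⟪y,v⟫ + t*‖v‖^2 + (gfun S y - gfun S (y - t•v))/t)/(a+b) := by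
        rw [hdiff, hsq]
        field_simp
      rw [key]
      have hstep : (-2*⟪y,v⟫ + t*‖v‖^2 + (gfun S y - gfun S (y - t•v))/t)/(a+b)
          ≤ N p / D p := by
        have hDp : D p = a + b := rfl
        have hNp : N p = -2*⟪y,v⟫ + t*‖v‖^2 + (gfun S (y + t₀•v) - gfun S y)/t₀ := rfl
        rw [hDp, hNp]
        gcongr
      exact le_trans hstep (le_of_lt h1)
    have hfin : clarkeDeriv (fun u => infDist u S) x (-v) ≤ -L + ε := by
      unfold clarkeDeriv
      exact limsup_le_of_le (hCobdd (-v)) hevq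
    exact hfin
  have hlow : ∀ w ∈ clarkeSubdiff (fun u => infDist u S) x, L ≤ (⟪w,v⟫ : ℝ) := by
    intro w hw
    have h1 := hw (-v)
    rw [inner_neg_right] at h1
    linarith [le_trans h1 hCDneg]
  -- Part (ii) : construction of a subgradient attaining the minimum
  have hts0' : ∀ n : ℕ, (0:ℝ) < ((n:ℝ)+1)⁻¹ := fun n => by positivity
  set ts : ℕ → ℝ := fun n => ((n:ℝ)+1)⁻¹ with htsdef
  have htn : ∀ n : ℕ, (0:ℝ) < ts n := hts0'
  have hts0 : Tendsto ts atTop (𝓝 (0:ℝ)) := by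
    have := tendsto_one_div_add_atTop_nhds_zero_nat (𝕜 := ℝ)
    simpa [htsdef, one_div] using this
  have hts_tendsto : Tendsto ts atTop (𝓝[>](0:ℝ)) := by
    apply tendsto_nhdsWithin_of_tendsto_nhds_of_eventually_within
    · exact hts0
    · exact Eventually.of_forall (fun n => htn n)
  set xs : ℕ → H := fun n => x + ts n • v with hxsdef
  have hxs_tendsto : Tendsto xs atTop (𝓝 x) := by
    have h2 : Tendsto (fun n => x + ts n • v) atTop (𝓝 (x + (0:ℝ) • v)) :=
      tendsto_const_nhds.add (hts0.smul tendsto_const_nhds)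
    simpa using h2
  have hys : ∀ n : ℕ, ∃ y ∈ S, dist (xs n) y < infDist (xs n) S + (ts n)^2 := by
    intro n
    refine (infDist_lt_iff hne).1 ?_
    nlinarith [htn n]
  choose ys hysS hysd using hys
  set ds : ℕ → ℝ := fun n => ‖xs n - ys n‖ with hdsdef
  set ws : ℕ → H := fun n => (ds n)⁻¹ • (xs n - ys n) with hwsdef
  have hws_norm : ∀ n, ‖ws n‖ ≤ 1 := by
    intro n
    rcases eq_or_ne (ds n) 0 with hd | hd
    · rw [hwsdef]
      simp [hd]
    · have hd' : 0 < ds n := lt_of_le_of_ne (norm_nonneg _) (Ne.symm hd)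
      rw [hwsdef]
      rw [norm_smul, Real.norm_eq_abs, abs_of_pos (inv_pos.2 hd')]
      rw [inv_mul_le_iff₀ hd', mul_one]
  have hfxs : Tendsto (fun n => infDist (xs n) S) atTop (𝓝 (infDist x S)) :=
    ((continuous_infDist_pt S).tendsto x).comp hxs_tendsto
  have hds_lb : ∀ n, infDist (xs n) S ≤ ds n := by
    intro n
    show infDist (xs n) S ≤ ‖xs n - ys n‖
    rw [← dist_eq_norm]
    exact infDist_le_dist_of_mem (hysS n)
  have hds_ub : ∀ n, ds n ≤ infDist (xs n) S + (ts n)^2 := by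
    intro n
    show ‖xs n - ys n‖ ≤ infDist (xs n) S + (ts n)^2
    rw [← dist_eq_norm]
    exact (hysd n).le
  have hds_ev : ∀ᶠ n in atTop, infDist x S / 2 < ds n := by
    have h2 := hfxs.eventually_const_lt (show infDist x S/2 < infDist x S by linarith)
    filter_upwards [h2] with n hn
    exact lt_of_lt_of_le hn (hds_lb n)
  have hds_tendsto : Tendsto ds atTop (𝓝 (infDist x S)) := by
    have hub : Tendsto (fun n => infDist (xs n) S + (ts n)^2) atTop
        (𝓝 (infDist x S + (0:ℝ)^2)) := hfxs.add (hts0.pow 2)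
    refine tendsto_of_tendsto_of_tendsto_of_le_of_le hfxs (by simpa using hub)
      hds_lb hds_ub
  -- the proximal inequality
  have hkey : ∀ (n : ℕ) (h : H), 0 < ds n →
      (⟪ws n, h⟫ : ℝ) ≤ (infDist (xs n) S - infDist (xs n - ts n • h) S)/ts n
        + ts n + ts n * ‖h‖^2/(2*ds n) := by
    intro n h hd
    have ht := htn n
    have h1 : infDist (xs n - ts n • h) S ≤ ‖(xs n - ys n) - ts n • h‖ := by
      have e : xs n - ts n • h - ys n = (xs n - ys n) - ts n • h := by abel
      rw [← e, ← dist_eq_norm]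
      exact infDist_le_dist_of_mem (hysS n)
    have h2 : ‖(xs n - ys n) - ts n • h‖^2
        = (ds n)^2 + (-(2*(ts n * ⟪xs n - ys n, h⟫)) + (ts n)^2*‖h‖^2) := by
      rw [norm_sub_sq_real, real_inner_smul_right, norm_smul, Real.norm_eq_abs,
        mul_pow, sq_abs]
      have : ‖xs n - ys n‖ = ds n := rfl
      rw [this]
      ring
    have h3 : ‖(xs n - ys n) - ts n • h‖
        ≤ ds n + (-(2*(ts n * ⟪xs n - ys n, h⟫)) + (ts n)^2*‖h‖^2)/(2*ds n) := by
      have h4 : 0 ≤ (ds n)^2 + (-(2*(ts n * ⟪xs n - ys n, h⟫)) + (ts n)^2*‖h‖^2) := by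
        rw [← h2]; positivity
      calc ‖(xs n - ys n) - ts n • h‖
          = Real.sqrt (‖(xs n - ys n) - ts n • h‖^2) := (Real.sqrt_sq (norm_nonneg _)).symm
        _ = Real.sqrt ((ds n)^2 + (-(2*(ts n * ⟪xs n - ys n, h⟫)) + (ts n)^2*‖h‖^2)) := by
            rw [h2]
        _ ≤ _ := sqrt_quad hd h4
    have h5 : (⟪ws n, h⟫ : ℝ) = ⟪xs n - ys n, h⟫/(ds n) := by
      rw [hwsdef]
      rw [real_inner_smul_left]
      rw [div_eq_inv_mul]
    have h6 := hds_ub n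
    have h7 : infDist (xs n - ts n • h) S
        ≤ ds n - ts n * (⟪xs n - ys n, h⟫/(ds n)) + (ts n)^2*‖h‖^2/(2*ds n) := by
      have e : (-(2*(ts n * ⟪xs n - ys n, h⟫)) + (ts n)^2*‖h‖^2)/(2*ds n)
          = -(ts n * (⟪xs n - ys n, h⟫/(ds n))) + (ts n)^2*‖h‖^2/(2*ds n) := by
        field_simp
      have h8 := le_trans h1 h3
      rw [e] at h8
      linarith
    have h8 : ts n * (⟪xs n - ys n, h⟫/(ds n))
        ≤ (infDist (xs n) S - infDist (xs n - ts n • h) S) + (ts n)^2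
          + (ts n)^2*‖h‖^2/(2*ds n) := by linarith
    rw [h5]
    calc ⟪xs n - ys n, h⟫/(ds n) = ts n * (⟪xs n - ys n, h⟫/(ds n))/(ts n) := by
          field_simp
      _ ≤ ((infDist (xs n) S - infDist (xs n - ts n • h) S) + (ts n)^2
          + (ts n)^2*‖h‖^2/(2*ds n))/(ts n) := by gcongr
      _ = (infDist (xs n) S - infDist (xs n - ts n • h) S)/ts n + ts n
          + ts n * ‖h‖^2/(2*ds n) := by
          field_simp
  -- bound in the direction v
  have boundA : ∀ ε > (0:ℝ), ∀ᶠ n in atTop, (⟪ws n, v⟫ : ℝ) ≤ L + ε := by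
    intro ε hε
    have hR : Tendsto (fun n => (infDist (xs n) S - infDist x S)/ts n
        + (ts n + ts n*‖v‖^2/(2*ds n))) atTop (𝓝 (L + ((0:ℝ) + 0*‖v‖^2/(2*infDist x S)))) := by
      refine Tendsto.add (step1.comp hts_tendsto) (Tendsto.add hts0 ?_)
      have hnum : Tendsto (fun n => ts n*‖v‖^2) atTop (𝓝 ((0:ℝ)*‖v‖^2)) :=
        hts0.mul tendsto_const_nhds
      have hden2 : Tendsto (fun n => 2*ds n) atTop (𝓝 (2*infDist x S)) :=
        hds_tendsto.const_mul 2
      exact hnum.div hden2 (by positivity)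
    have hR' : Tendsto (fun n => (infDist (xs n) S - infDist x S)/ts n
        + (ts n + ts n*‖v‖^2/(2*ds n))) atTop (𝓝 L) := by simpa using hR
    have hev := hR'.eventually_lt_const (show L < L + ε by linarith)
    filter_upwards [hev, hds_ev] with n h1 h2
    have hd : 0 < ds n := lt_trans (half_pos hfx) h2
    have hk := hkey n v hd
    have hxv : xs n - ts n • v = x := by
      rw [hxsdef]
      exact add_sub_cancel_right x (ts n • v)
    rw [hxv] at hk
    linarith
  -- bound in an arbitrary direction
  have boundB : ∀ (h : H), ∀ ε > (0:ℝ), ∀ᶠ n in atTop,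
      (⟪ws n, h⟫ : ℝ) ≤ clarkeDeriv (fun u => infDist u S) x h + ε := by
    intro h ε hε
    have hrfl : Filter.limsup
        (fun p : H × ℝ => (infDist (p.1 + p.2 • h) S - infDist p.1 S)/p.2) Φ
        = clarkeDeriv (fun u => infDist u S) x h := rfl
    have hlim : Filter.limsup
        (fun p : H × ℝ => (infDist (p.1 + p.2 • h) S - infDist p.1 S)/p.2) Φ
        < clarkeDeriv (fun u => infDist u S) x h + ε/2 := by
      rw [hrfl]; linarith
    have hevp := eventually_lt_of_limsup_lt hlim (hBdd h)
    have hup : Tendsto (fun n => ((xs n - ts n • h : H), ts n)) atTop Φ := by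
      rw [hΦdef]
      refine Tendsto.prodMk ?_ hts_tendsto
      have h2 : Tendsto (fun n => xs n - ts n • h) atTop (𝓝 (x - (0:ℝ) • h)) :=
        hxs_tendsto.sub (hts0.smul tendsto_const_nhds)
      simpa using h2
    have hevn := hup.eventually hevp
    have herr : Tendsto (fun n => ts n + ts n*‖h‖^2/(2*ds n)) atTop
        (𝓝 ((0:ℝ) + 0*‖h‖^2/(2*infDist x S))) := by
      refine Tendsto.add hts0 ?_
      exact (hts0.mul tendsto_const_nhds).div (hds_tendsto.const_mul 2) (by positivity)
    have herr' : Tendsto (fun n => ts n + ts n*‖h‖^2/(2*ds n)) atTop (𝓝 (0:ℝ)) := by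
      simpa using herr
    have heve := herr'.eventually_lt_const (show (0:ℝ) < ε/2 by linarith)
    filter_upwards [hevn, heve, hds_ev] with n h1 h2 h3
    have hd : 0 < ds n := lt_trans (half_pos hfx) h3
    have hk := hkey n h hd
    have hsimp : xs n - ts n • h + ts n • h = xs n := sub_add_cancel _ _
    simp only [hsimp] at h1
    linarith
  -- weak-* cluster point
  set φs : ℕ → WeakDual ℝ H :=
    fun n => StrongDual.toWeakDual (InnerProductSpace.toDual ℝ H (ws n)) with hφsdef
  have hφsK : ∀ n, φs n ∈ (WeakDual.toStrongDual ⁻¹' closedBall 0 1 : Set (WeakDual ℝ H)) := by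
    intro n
    simp only [mem_preimage, mem_closedBall, dist_zero_right]
    have e : ‖WeakDual.toStrongDual (φs n)‖ = ‖ws n‖ := by
      rw [hφsdef]
      exact (InnerProductSpace.toDual ℝ H).norm_map (ws n)
    rw [e]
    exact hws_norm n
  have hmapK : Filter.map φs atTop
      ≤ 𝓟 (WeakDual.toStrongDual ⁻¹' closedBall 0 1 : Set (WeakDual ℝ H)) := by
    rw [Filter.le_principal_iff]
    exact Filter.mem_map.2 (Eventually.of_forall hφsK)
  obtain ⟨φ, hφK, hφcl⟩ :=
    (WeakDual.isCompact_closedBall (𝕜 := ℝ) (E := H) 0 1).exists_clusterPt hmapK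
  set w₀ : H := (InnerProductSpace.toDual ℝ H).symm (WeakDual.toStrongDual φ) with hw₀def
  have hw₀app : ∀ h : H, (⟪w₀, h⟫ : ℝ) = φ h := by
    intro h
    rw [hw₀def, ← InnerProductSpace.toDual_apply_apply,
      LinearIsometryEquiv.apply_symm_apply]
    rfl
  have hcluster : ∀ h : H,
      ClusterPt (φ h) (Filter.map (fun n => (⟪ws n, h⟫ : ℝ)) atTop) := by
    intro h
    have hcont : ContinuousAt (fun ψ : WeakDual ℝ H => ψ h) φ :=
      (WeakDual.eval_continuous h).continuousAt
    have htend : Tendsto (fun ψ : WeakDual ℝ H => ψ h) (Filter.map φs atTop)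
        (Filter.map (fun n => (⟪ws n, h⟫ : ℝ)) atTop) := by
      rw [Filter.tendsto_map'_iff]
      have e : ((fun ψ : WeakDual ℝ H => ψ h) ∘ φs) = fun n => (⟪ws n, h⟫ : ℝ) := by
        funext n
        simp only [Function.comp_apply, hφsdef]
        exact InnerProductSpace.toDual_apply_apply
      rw [e]
      exact tendsto_map
    exact hφcl.map hcont htend
  have hcluster_le : ∀ (s : ℕ → ℝ) (a c : ℝ), ClusterPt a (Filter.map s atTop) →
      (∀ᶠ n in atTop, s n ≤ c) → a ≤ c := by
    intro s a c hcl hev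
    by_contra hlt
    push_neg at hlt
    have h1 : Ioi c ∈ 𝓝 a := Ioi_mem_nhds hlt
    have h2 : {r : ℝ | r ≤ c} ∈ Filter.map s atTop := hev
    have h3 := Filter.inter_mem (Filter.mem_inf_of_left h1)
      (Filter.mem_inf_of_right h2)
    obtain ⟨r, hr1, hr2⟩ := hcl.neBot.nonempty_of_mem h3
    rw [mem_Ioi] at hr1
    exact absurd hr1 (not_lt.2 hr2)
  have hw₀v : (⟪w₀, v⟫ : ℝ) ≤ L := by
    rw [hw₀app v]
    refine le_of_forall_pos_le_add (fun ε hε => ?_)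
    exact hcluster_le _ _ _ (hcluster v) (boundA ε hε)
  have hw₀sub : w₀ ∈ clarkeSubdiff (fun u => infDist u S) x := by
    simp only [clarkeSubdiff, Set.mem_setOf_eq]
    intro h
    rw [show (inner ℝ w₀ h : ℝ) = φ h from hw₀app h]
    refine le_of_forall_pos_le_add (fun ε hε => ?_)
    exact hcluster_le _ _ _ (hcluster h) (boundB h ε hε)
  -- conclusion
  have hw₀vL : (inner ℝ w₀ v : ℝ) = L := le_antisymm hw₀v (hlow w₀ hw₀sub)
  have hLA : L ∈ ((fun w : H => (inner ℝ w v : ℝ)) ''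
      clarkeSubdiff (fun u => infDist u S) x) := ⟨w₀, hw₀sub, hw₀vL⟩
  have hAlb : ∀ a ∈ ((fun w : H => (inner ℝ w v : ℝ)) ''
      clarkeSubdiff (fun u => infDist u S) x), L ≤ a := by
    rintro _ ⟨w, hw, rfl⟩
    exact hlow w hw
  have hsInf : sInf ((fun w : H => (inner ℝ w v : ℝ)) ''
      clarkeSubdiff (fun u => infDist u S) x) = L :=
    le_antisymm (csInf_le ⟨L, hAlb⟩ hLA) (le_csInf ⟨L, hLA⟩ hAlb)
  rw [hsInf]
  exact step1


end
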